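/- arXiv:1509.04863 — 3 statements merged into one kernel-verified Lean document; each statement's English description precedes it below -/
import Mathlib

section
/- Let M divide N, let Φ_M be an M×M circulant matrix, and let Φ = [Φ_M Φ_M ... Φ_M] be the M×N block matrix formed by concatenating N/M copies of Φ_M horizontally. Let t ∈ ℝ^M be nonzero, T = circ([t, 0_{1×(N−M)}]) ∈ ℝ^{N×N}, and T̂ = circ(t) ∈ ℝ^{M×M}. Then for every x ∈ ℝ^N and every index i with 0 ≤ i ≤ M−1, (T̂ Φ x)_i = (Φ T x)_i. -/
lemma key_nat (M N l i k : ℕ) (hM : 0 < M) (hdvd : M ∣ N) (hMN : M ≤ N)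
    (hi : i < M) (hk : k < M) :
    (M - i + (N - ((M - i + k) % M) + l)) % M = (M - k + l) % M := by
  set r := (M - i + k) % M with hrdef
  have hrlt : r < M := Nat.mod_lt _ hM
  have hrN : r ≤ N := le_of_lt (lt_of_lt_of_le hrlt hMN)
  zify [hi.le, hk.le, hrN]
  have h1 : (r : ℤ) ≡ (M : ℤ) - i + k [ZMOD (M:ℤ)] := by
    have : (r : ℤ) = ((M - i + k : ℕ) : ℤ) % (M : ℕ) := by exact_mod_cast congrArg (Nat.cast : ℕ → ℤ) hrdef
    rw [Int.ModEq, this, Int.emod_emod_of_dvd _ dvd_rfl]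
    push_cast [hi.le]
    ring_nf
  have h2 : ((N : ℤ)) ≡ 0 [ZMOD (M:ℤ)] := Int.modEq_zero_iff_dvd.2 (Int.natCast_dvd_natCast.2 hdvd)
  have goal : ((M:ℤ) - i + ((N:ℤ) - r + l)) ≡ ((M:ℤ) - k + l) [ZMOD (M:ℤ)] := by
    rw [Int.modEq_iff_dvd]
    obtain ⟨u, hu⟩ := Int.modEq_iff_dvd.1 h1
    obtain ⟨v, hv⟩ := Int.modEq_iff_dvd.1 h2
    exact ⟨1 - u + v, by linarith⟩
  exact goal

/-- Theorem 2 of the paper: commutation for the block-concatenated circulant sampling matrix. -/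
theorem block_circulant_commute (N M : ℕ) (hM : 0 < M) (hdvd : M ∣ N)
    (ΦM : Matrix (Fin M) (Fin M) ℝ) (φ : Fin M → ℝ)
    (hΦM : ∀ i j : Fin M, ΦM i j = φ (j - i))
    (t : Fin M → ℝ) (ht : t ≠ 0)
    (T : Matrix (Fin N) (Fin N) ℝ)
    (hT : ∀ i j : Fin N, T i j =
      if h : ((j - i : Fin N) : ℕ) < M then t ⟨((j - i : Fin N) : ℕ), h⟩ else 0)
    (That : Matrix (Fin M) (Fin M) ℝ)
    (hThat : ∀ i j : Fin M, That i j = t (j - i))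
    (Φ : Matrix (Fin M) (Fin N) ℝ)
    (hΦ : ∀ (k : Fin M) (j : Fin N), Φ k j = ΦM k ⟨(j : ℕ) % M, Nat.mod_lt _ hM⟩) :
    ∀ (x : Fin N → ℝ) (i : Fin M),
      That.mulVec (Φ.mulVec x) i = Φ.mulVec (T.mulVec x) i := by
  have hTΦ : That * Φ = Φ * T := by
    ext i l
    have hN : 0 < N := l.pos
    haveI : NeZero N := ⟨hN.ne'⟩
    haveI : NeZero M := ⟨hM.ne'⟩
    have hMN : M ≤ N := Nat.le_of_dvd hN hdvd
    simp only [Matrix.mul_apply, hThat, hΦ, hΦM, hT]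
    -- LHS: ∑ k : Fin M, t (k - i) * φ (⟨l % M⟩ - k)
    -- RHS: ∑ j : Fin N, φ (⟨j % M⟩ - i) * dite ((l - j).val < M) (t ⟨(l-j).val⟩) 0
    have step1 : ∀ j : Fin N,
        φ ((⟨(j : ℕ) % M, Nat.mod_lt _ hM⟩ : Fin M) - i) *
          (if h : ((l - j : Fin N) : ℕ) < M then t ⟨((l - j : Fin N) : ℕ), h⟩ else 0)
        = if ((l - j : Fin N) : ℕ) < M then
            φ ((⟨(j : ℕ) % M, Nat.mod_lt _ hM⟩ : Fin M) - i) *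
              t ⟨((l - j : Fin N) : ℕ) % M, Nat.mod_lt _ hM⟩ else 0 := by
      intro j
      by_cases h : ((l - j : Fin N) : ℕ) < M
      · simp only [dif_pos h, if_pos h]
        congr 2
        exact Fin.ext (Nat.mod_eq_of_lt h).symm
      · simp [dif_neg h, if_neg h]
    rw [Finset.sum_congr rfl (fun j _ => step1 j), ← Finset.sum_filter]
    -- now RHS is sum over filter
    refine (Finset.sum_nbij' (fun k : Fin M => l - Fin.castLE hMN (k - i))
      (fun j : Fin N => i + (⟨((l - j : Fin N) : ℕ) % M, Nat.mod_lt _ hM⟩ : Fin M))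
      ?_ ?_ ?_ ?_ ?_)
    · intro k _
      simp only [Finset.mem_filter, Finset.mem_univ, true_and]
      rw [sub_sub_cancel]
      exact (k - i).isLt
    · intro j _
      exact Finset.mem_univ _
    · intro k _
      have h1 : l - (l - Fin.castLE hMN (k - i)) = Fin.castLE hMN (k - i) := sub_sub_cancel _ _
      rw [h1]
      have h2 : ((Fin.castLE hMN (k - i) : Fin N) : ℕ) = ((k - i : Fin M) : ℕ) := rfl
      have h3 : (⟨((Fin.castLE hMN (k - i) : Fin N) : ℕ) % M, Nat.mod_lt _ hM⟩ : Fin M) = k - i := by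
        apply Fin.ext
        simp [h2, Nat.mod_eq_of_lt (k - i).isLt]
      rw [h3, add_sub_cancel]
    · intro j hj
      simp only [Finset.mem_filter, Finset.mem_univ, true_and] at hj
      have h3 : (i + (⟨((l - j : Fin N) : ℕ) % M, Nat.mod_lt _ hM⟩ : Fin M)) - i
          = (⟨((l - j : Fin N) : ℕ) % M, Nat.mod_lt _ hM⟩ : Fin M) := add_sub_cancel_left _ _
      rw [h3]
      have h4 : Fin.castLE hMN (⟨((l - j : Fin N) : ℕ) % M, Nat.mod_lt _ hM⟩ : Fin M) = l - j := by
        apply Fin.ext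
        simp [Nat.mod_eq_of_lt hj]
      rw [h4, sub_sub_cancel]
    · intro k _
      have h1 : l - (l - Fin.castLE hMN (k - i)) = Fin.castLE hMN (k - i) := sub_sub_cancel _ _
      rw [h1]
      have htv : (⟨((Fin.castLE hMN (k - i) : Fin N) : ℕ) % M, Nat.mod_lt _ hM⟩ : Fin M) = k - i := by
        apply Fin.ext
        simpa using Nat.mod_eq_of_lt (k - i).isLt
      rw [htv]
      have hφ : (⟨((l - Fin.castLE hMN (k - i) : Fin N) : ℕ) % M, Nat.mod_lt _ hM⟩ : Fin M) - i
          = (⟨(l : ℕ) % M, Nat.mod_lt _ hM⟩ : Fin M) - k := by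
        apply Fin.ext
        simp only [Fin.sub_def, Fin.coe_castLE, ]
        rw [Nat.mod_mod_of_dvd _ hdvd, Nat.add_mod_mod, Nat.add_mod_mod]
        exact key_nat M N (l : ℕ) (i : ℕ) (k : ℕ) hM hdvd hMN i.isLt k.isLt
      rw [hφ]
      ring
  intro x i
  rw [Matrix.mulVec_mulVec, Matrix.mulVec_mulVec, hTΦ]
end

section
/- Let x ∈ {−1,1}^N have i.i.d. Rademacher entries, fix m, set t_i = x_{(m+i) mod N} for i < K, and (Tx)_k = Σ_{i=0}^{K−1} t_i x_{(k+i) mod N}. Suppose M divides N, L = N/M, and let ỹ_k = Σ_{i=0}^{L−1} (Tx)_{(k+iM) mod N} for 0 ≤ k < M. If k ≡ m (mod M), then E[ỹ_k] = K; assuming additionally that the K-windows indexed by k+iM for distinct i (excluding the one equal to m) are pairwise disjoint and disjoint from the window at m, Var[ỹ_k] = (L−1)·K. -/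
open MeasureTheory ProbabilityTheory

section AuxLemmas

variable {Ω : Type*} [MeasurableSpace Ω] {μ : Measure Ω} [IsProbabilityMeasure μ]
  {N : ℕ} {X : Fin N → Ω → ℝ}

/-- Almost surely, every coordinate is ±1. -/
lemma rad_ae_pm (hmeas : ∀ i, Measurable (X i))
    (hrad : ∀ i, μ {ω | X i ω = 1} = 1/2 ∧ μ {ω | X i ω = -1} = 1/2) :
    ∀ᵐ ω ∂μ, ∀ i, X i ω = 1 ∨ X i ω = -1 := by
  rw [ae_all_iff]
  intro i
  have hA : MeasurableSet {ω | X i ω = 1} := hmeas i (measurableSet_singleton 1)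
  have hB : MeasurableSet {ω | X i ω = -1} := hmeas i (measurableSet_singleton (-1))
  have hd : Disjoint {ω | X i ω = 1} {ω | X i ω = -1} := by
    rw [Set.disjoint_left]
    rintro ω h1 h2
    simp only [Set.mem_setOf_eq] at h1 h2
    rw [h1] at h2; norm_num at h2
  have hu : μ ({ω | X i ω = 1} ∪ {ω | X i ω = -1}) = 1 := by
    rw [measure_union hd hB, (hrad i).1, (hrad i).2, ENNReal.add_halves]
  have h0 : μ ({ω | X i ω = 1} ∪ {ω | X i ω = -1})ᶜ = 0 :=
    (prob_compl_eq_zero_iff (hA.union hB)).mpr hu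
  rw [ae_iff]
  have hset : {ω | ¬ (X i ω = 1 ∨ X i ω = -1)}
      = ({ω | X i ω = 1} ∪ {ω | X i ω = -1})ᶜ := by
    ext ω; simp [not_or]
  rw [hset]; exact h0

/-- Each coordinate has zero mean. -/
lemma rad_integral_zero (hmeas : ∀ i, Measurable (X i))
    (hrad : ∀ i, μ {ω | X i ω = 1} = 1/2 ∧ μ {ω | X i ω = -1} = 1/2) :
    ∀ i, (∫ ω, X i ω ∂μ) = 0 := by
  intro i
  have hA : MeasurableSet {ω | X i ω = 1} := hmeas i (measurableSet_singleton 1)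
  have hB : MeasurableSet {ω | X i ω = -1} := hmeas i (measurableSet_singleton (-1))
  have hpm := rad_ae_pm hmeas hrad
  have heq : X i =ᵐ[μ] fun ω =>
      ({ω | X i ω = 1} : Set Ω).indicator (fun _ => (1:ℝ)) ω
      + ({ω | X i ω = -1} : Set Ω).indicator (fun _ => (-1:ℝ)) ω := by
    filter_upwards [hpm] with ω h
    rcases h i with h1 | h1
    · have h2 : ¬ (X i ω = -1) := by rw [h1]; norm_num
      simp only [Set.indicator_apply, Set.mem_setOf_eq, h1, h2]
      norm_num
    · have h2 : ¬ (X i ω = 1) := by rw [h1]; norm_num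
      simp only [Set.indicator_apply, Set.mem_setOf_eq, h1, h2]
      norm_num
  rw [integral_congr_ae heq, integral_add
      ((integrable_const (1:ℝ)).indicator hA) ((integrable_const (-1:ℝ)).indicator hB)]
  rw [integral_indicator_const _ hA, integral_indicator_const _ hB, measureReal_def, measureReal_def, (hrad i).1, (hrad i).2]
  norm_num

end AuxLemmas


/-- Pointwise splitting of the indicator of a disjunction. -/
lemma ite_or_split (C D B : Prop) [Decidable C] [Decidable D] [Decidable B]
    (h : B → (C ↔ D)) :
    (if (C ∧ D) ∨ B then (1:ℝ) else 0)
      = (if C then (1:ℝ) else 0) * (if D then (1:ℝ) else 0)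
        + ((if B then (1:ℝ) else 0) - (if B then (if C then (1:ℝ) else 0) else 0)) := by
  by_cases hC : C <;> by_cases hD : D <;> by_cases hB : B <;>
    first
      | (exact absurd ((h hB).mp hC) hD)
      | (exact absurd ((h hB).mpr hD) hC)
      | (simp [hC, hD, hB])

/-- The core computation, abstracted over the index maps. -/
lemma aggregated_mean_variance_aux
    {Ω : Type*} [MeasurableSpace Ω] (μ : Measure Ω) [IsProbabilityMeasure μ]
    {N K L : ℕ}
    (X : Fin N → Ω → ℝ)
    (hmeas : ∀ i, Measurable (X i))
    (hindep : iIndepFun X μ)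
    (hrad : ∀ i, μ {ω | X i ω = 1} = 1/2 ∧ μ {ω | X i ω = -1} = 1/2)
    (a : Fin K → Fin N) (b : Fin L → Fin K → Fin N) (i0 : Fin L)
    (ha : Function.Injective a)
    (hbinj : ∀ i, Function.Injective (b i))
    (hb0 : ∀ j, b i0 j = a j)
    (hab : ∀ i, i ≠ i0 → ∀ j j', a j ≠ b i j')
    (hbb : ∀ i i', i ≠ i' → ∀ j j', b i j ≠ b i' j') :
    (∫ ω, (∑ i : Fin L, ∑ j : Fin K, X (a j) ω * X (b i j) ω) ∂μ) = (K : ℝ) ∧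
    variance (fun ω => ∑ i : Fin L, ∑ j : Fin K, X (a j) ω * X (b i j) ω) μ
      = ((L : ℝ) - 1) * (K : ℝ) := by
  classical
  have hpm := rad_ae_pm hmeas hrad
  have hEX := rad_integral_zero hmeas hrad
  have hsq : ∀ᵐ ω ∂μ, ∀ c, X c ω * X c ω = 1 := by
    filter_upwards [hpm] with ω h c
    rcases h c with h1 | h1 <;> rw [h1] <;> norm_num
  have habs : ∀ᵐ ω ∂μ, ∀ c, |X c ω| ≤ 1 := by
    filter_upwards [hpm] with ω h c
    rcases h c with h1 | h1 <;> rw [h1] <;> norm_num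
  -- bounded measurable functions are in L² (and integrable)
  have hint : ∀ g : Ω → ℝ, Measurable g → (∀ᵐ ω ∂μ, |g ω| ≤ 1) → MemLp g 2 μ := by
    intro g hg hb
    exact MemLp.of_bound hg.aestronglyMeasurable 1 (by simpa [Real.norm_eq_abs] using hb)
  -- expectation of products over finsets
  have hPmeas : ∀ s : Finset (Fin N), Measurable (fun ω => ∏ c ∈ s, X c ω) :=
    fun s => Finset.measurable_prod s fun c _ => hmeas c
  have hPbd : ∀ s : Finset (Fin N), ∀ᵐ ω ∂μ, |∏ c ∈ s, X c ω| ≤ 1 := by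
    intro s
    filter_upwards [habs] with ω h
    rw [Finset.abs_prod]
    exact Finset.prod_le_one (fun c _ => abs_nonneg _) (fun c _ => h c)
  have hPint : ∀ s : Finset (Fin N), Integrable (fun ω => ∏ c ∈ s, X c ω) μ :=
    fun s => (hint _ (hPmeas s) (hPbd s)).integrable one_le_two
  have hPE : ∀ s : Finset (Fin N),
      (∫ ω, ∏ c ∈ s, X c ω ∂μ) = ∏ c ∈ s, ∫ ω, X c ω ∂μ := by
    intro s
    induction s using Finset.induction_on with
    | empty => simp
    | @insert c s hc ih =>
      have hIndep : IndepFun (X c) (∏ d ∈ s, X d) μ :=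
        (hindep.indepFun_finsetProd_of_notMem hmeas hc).symm
      have hfun : (∏ d ∈ s, X d) = fun ω => ∏ d ∈ s, X d ω := by
        funext ω; simp
      have hmul := hIndep.integral_mul_eq_mul_integral
        ((hint _ (hmeas c) (by filter_upwards [habs] with ω h; exact h c)).integrable
          one_le_two).aestronglyMeasurable (hfun ▸ hPint s).aestronglyMeasurable
      simp only [Finset.prod_insert hc]
      calc (∫ ω, X c ω * ∏ d ∈ s, X d ω ∂μ)
          = ∫ ω, (X c * ∏ d ∈ s, X d) ω ∂μ := by
            refine integral_congr_ae (Filter.Eventually.of_forall fun ω => ?_)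
            simp
        _ = (∫ ω, X c ω ∂μ) * ∫ ω, (∏ d ∈ s, X d) ω ∂μ := hmul
        _ = (∫ ω, X c ω ∂μ) * ∏ d ∈ s, ∫ ω, X d ω ∂μ := by
            rw [← ih]
            congr 1
            refine integral_congr_ae (Filter.Eventually.of_forall fun ω => ?_)
            simp
  have hP0 : ∀ s : Finset (Fin N), s.Nonempty → (∫ ω, ∏ c ∈ s, X c ω ∂μ) = 0 := by
    intro s hs
    rw [hPE]
    exact Finset.prod_eq_zero hs.choose_spec (hEX _)
  -- expectation of a product of two distinct coordinates
  have hpairE : ∀ c d : Fin N, c ≠ d → (∫ ω, X c ω * X d ω ∂μ) = 0 := by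
    intro c d hcd
    have h1 : (fun ω => X c ω * X d ω) = fun ω => ∏ e ∈ ({c, d} : Finset (Fin N)), X e ω := by
      funext ω; rw [Finset.prod_pair hcd]
    rw [h1]
    exact hP0 _ ⟨c, by simp⟩
  -- expectation of a product of four pairwise distinct coordinates
  have hquadE : ∀ c d e g : Fin N, c ≠ d → c ≠ e → c ≠ g → d ≠ e → d ≠ g → e ≠ g →
      (∫ ω, X c ω * X d ω * (X e ω * X g ω) ∂μ) = 0 := by
    intro c d e g h1 h2 h3 h4 h5 h6
    have heq : (fun ω => X c ω * X d ω * (X e ω * X g ω))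
        = fun ω => ∏ x ∈ ({c, d, e, g} : Finset (Fin N)), X x ω := by
      funext ω
      rw [show ({c, d, e, g} : Finset (Fin N)) = insert c (insert d {e, g}) from rfl,
        Finset.prod_insert (by simp [h1, h2, h3]),
        Finset.prod_insert (by simp [h4, h5]), Finset.prod_pair h6]
      ring
    rw [heq]
    exact hP0 _ ⟨c, by simp⟩
  -- integral of an a.e.-one function
  have honeE : ∀ g : Ω → ℝ, (g =ᵐ[μ] fun _ => (1:ℝ)) → (∫ ω, g ω ∂μ) = 1 := by
    intro g hg
    rw [integral_congr_ae hg]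
    simp
  -- basic facts about the single terms
  have hTmeas : ∀ (i : Fin L) (j : Fin K),
      Measurable (fun ω => X (a j) ω * X (b i j) ω) :=
    fun i j => (hmeas (a j)).mul (hmeas (b i j))
  have hTbd : ∀ (i : Fin L) (j : Fin K), ∀ᵐ ω ∂μ, |X (a j) ω * X (b i j) ω| ≤ 1 := by
    intro i j
    filter_upwards [habs] with ω h
    rw [abs_mul]
    exact mul_le_one₀ (h _) (abs_nonneg _) (h _)
  have hTmem : ∀ (i : Fin L) (j : Fin K), MemLp (fun ω => X (a j) ω * X (b i j) ω) 2 μ :=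
    fun i j => hint _ (hTmeas i j) (hTbd i j)
  have hTint : ∀ (i : Fin L) (j : Fin K),
      Integrable (fun ω => X (a j) ω * X (b i j) ω) μ :=
    fun i j => (hTmem i j).integrable one_le_two
  have hTTint : ∀ (i : Fin L) (j : Fin K) (i' : Fin L) (j' : Fin K),
      Integrable (fun ω => X (a j) ω * X (b i j) ω * (X (a j') ω * X (b i' j') ω)) μ := by
    intro i j i' j'
    refine (hint _ ((hTmeas i j).mul (hTmeas i' j')) ?_).integrable one_le_two
    filter_upwards [hTbd i j, hTbd i' j'] with ω h1 h2
    rw [Pi.mul_apply, abs_mul]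
    exact mul_le_one₀ h1 (abs_nonneg _) h2
  -- first moments of single terms
  have hE1 : ∀ (i : Fin L) (j : Fin K),
      (∫ ω, X (a j) ω * X (b i j) ω ∂μ) = if i = i0 then 1 else 0 := by
    intro i j
    by_cases hi : i = i0
    · subst hi
      rw [if_pos rfl, hb0 j]
      refine honeE _ ?_
      filter_upwards [hsq] with ω h
      exact h (a j)
    · rw [if_neg hi]
      exact hpairE _ _ (hab i hi j j)
  -- second moments: cross terms
  have hE2 : ∀ (i : Fin L) (j : Fin K) (i' : Fin L) (j' : Fin K),
      (∫ ω, X (a j) ω * X (b i j) ω * (X (a j') ω * X (b i' j') ω) ∂μ)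
      = if (i = i0 ∧ i' = i0) ∨ (i = i' ∧ j = j') then 1 else 0 := by
    intro i j i' j'
    by_cases hi : i = i0 <;> by_cases hi' : i' = i0
    · -- both windows hit m: term = 1 a.e.
      subst hi; subst hi'
      rw [if_pos (Or.inl ⟨rfl, rfl⟩), hb0 j, hb0 j']
      refine honeE _ ?_
      filter_upwards [hsq] with ω h
      have h1 := h (a j); have h2 := h (a j')
      linear_combination (X (a j') ω * X (a j') ω) * h1 + h2
    · -- first is the square, second a genuine cross term
      subst hi
      rw [if_neg (by rintro (⟨-, hc⟩ | ⟨hc, -⟩); exact hi' hc; exact hi' hc.symm), hb0 j]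
      have heq : (fun ω => X (a j) ω * X (a j) ω * (X (a j') ω * X (b i' j') ω))
          =ᵐ[μ] fun ω => X (a j') ω * X (b i' j') ω := by
        filter_upwards [hsq] with ω h
        rw [h (a j), one_mul]
      rw [integral_congr_ae heq]
      exact hpairE _ _ (hab i' hi' j' j')
    · subst hi'
      rw [if_neg (by rintro (⟨hc, -⟩ | ⟨hc, -⟩); exact hi hc; exact hi (hc.trans rfl)), hb0 j']
      have heq : (fun ω => X (a j) ω * X (b i j) ω * (X (a j') ω * X (a j') ω))
          =ᵐ[μ] fun ω => X (a j) ω * X (b i j) ω := by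
        filter_upwards [hsq] with ω h
        rw [h (a j'), mul_one]
      rw [integral_congr_ae heq]
      exact hpairE _ _ (hab i hi j j)
    · -- both windows away from m
      by_cases hii : i = i'
      · subst hii
        by_cases hjj : j = j'
        · subst hjj
          rw [if_pos (Or.inr ⟨rfl, rfl⟩)]
          refine honeE _ ?_
          filter_upwards [hsq] with ω h
          have h1 := h (a j); have h2 := h (b i j)
          linear_combination (X (b i j) ω * X (b i j) ω) * h1 + h2
        · -- same window, different offsets: four distinct coordinates
          rw [if_neg (by rintro (⟨hc, -⟩ | ⟨-, hc⟩); exact hi hc; exact hjj hc)]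
          have heq : (fun ω => X (a j) ω * X (b i j) ω * (X (a j') ω * X (b i j') ω))
              = fun ω => X (a j) ω * X (a j') ω * (X (b i j) ω * X (b i j') ω) := by
            funext ω; ring
          rw [heq]
          exact hquadE _ _ _ _ (fun hc => hjj (ha hc)) (hab i hi j j) (hab i hi j j')
            (hab i hi j' j) (hab i hi j' j') (fun hc => hjj (hbinj i hc))
      · by_cases hjj : j = j'
        · -- same offset, different windows
          subst hjj
          rw [if_neg (by rintro (⟨hc, -⟩ | ⟨hc, -⟩); exact hi hc; exact hii hc)]
          have heq : (fun ω => X (a j) ω * X (b i j) ω * (X (a j) ω * X (b i' j) ω))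
              =ᵐ[μ] fun ω => X (b i j) ω * X (b i' j) ω := by
            filter_upwards [hsq] with ω h
            have h1 := h (a j)
            linear_combination (X (b i j) ω * X (b i' j) ω) * h1
          rw [integral_congr_ae heq]
          exact hpairE _ _ (hbb i i' hii j j)
        · -- everything distinct
          rw [if_neg (by rintro (⟨hc, -⟩ | ⟨hc, -⟩); exact hi hc; exact hii hc)]
          have heq : (fun ω => X (a j) ω * X (b i j) ω * (X (a j') ω * X (b i' j') ω))
              = fun ω => X (a j) ω * X (a j') ω * (X (b i j) ω * X (b i' j') ω) := by
            funext ω; ring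
          rw [heq]
          exact hquadE _ _ _ _ (fun hc => hjj (ha hc)) (hab i hi j j) (hab i' hi' j j')
            (hab i hi j' j) (hab i' hi' j' j') (hbb i i' hii j j')
  -- the mean
  have hmean : (∫ ω, (∑ i : Fin L, ∑ j : Fin K, X (a j) ω * X (b i j) ω) ∂μ) = (K : ℝ) := by
    rw [integral_finset_sum _ (fun i _ => integrable_finset_sum _ (fun j _ => hTint i j))]
    have hstep : ∀ i : Fin L, (∫ ω, ∑ j : Fin K, X (a j) ω * X (b i j) ω ∂μ)
        = ∑ j : Fin K, ∫ ω, X (a j) ω * X (b i j) ω ∂μ :=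
      fun i => integral_finset_sum _ (fun j _ => hTint i j)
    calc (∑ i : Fin L, ∫ ω, ∑ j : Fin K, X (a j) ω * X (b i j) ω ∂μ)
        = ∑ i : Fin L, ∑ j : Fin K, ∫ ω, X (a j) ω * X (b i j) ω ∂μ :=
          Finset.sum_congr rfl fun i _ => hstep i
      _ = ∑ i : Fin L, ∑ _j : Fin K, if i = i0 then (1:ℝ) else 0 :=
          Finset.sum_congr rfl fun i _ => Finset.sum_congr rfl fun j _ => hE1 i j
      _ = (K : ℝ) := by
          rw [Finset.sum_comm]
          simp [Finset.sum_ite_eq']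
  refine ⟨hmean, ?_⟩
  -- the variance
  set f : Ω → ℝ := fun ω => ∑ i : Fin L, ∑ j : Fin K, X (a j) ω * X (b i j) ω with hf
  have hfprod : f = fun ω => ∑ p : Fin L × Fin K, X (a p.2) ω * X (b p.1 p.2) ω := by
    funext ω
    rw [hf]
    exact (Fintype.sum_prod_type' _).symm
  have hfmem : MemLp f 2 μ := by
    rw [hfprod]
    exact memLp_finsetSum _ (fun p _ => hTmem p.1 p.2)
  have hsqE : (∫ ω, f ω * f ω ∂μ) = (K : ℝ) * K + ((L : ℝ) * K - K) := by
    have hexp : (fun ω => f ω * f ω) = fun ω =>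
        ∑ p : Fin L × Fin K, ∑ q : Fin L × Fin K,
          X (a p.2) ω * X (b p.1 p.2) ω * (X (a q.2) ω * X (b q.1 q.2) ω) := by
      funext ω
      rw [hfprod]
      exact Finset.sum_mul_sum _ _ _ _
    rw [hexp, integral_finset_sum _ (fun p _ =>
      integrable_finset_sum _ (fun q _ => hTTint p.1 p.2 q.1 q.2))]
    have hstep : ∀ p : Fin L × Fin K,
        (∫ ω, ∑ q : Fin L × Fin K,
          X (a p.2) ω * X (b p.1 p.2) ω * (X (a q.2) ω * X (b q.1 q.2) ω) ∂μ)
        = ∑ q : Fin L × Fin K, ∫ ω,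
            X (a p.2) ω * X (b p.1 p.2) ω * (X (a q.2) ω * X (b q.1 q.2) ω) ∂μ :=
      fun p => integral_finset_sum _ (fun q _ => hTTint p.1 p.2 q.1 q.2)
    calc (∑ p : Fin L × Fin K, ∫ ω, ∑ q : Fin L × Fin K,
          X (a p.2) ω * X (b p.1 p.2) ω * (X (a q.2) ω * X (b q.1 q.2) ω) ∂μ)
        = ∑ p : Fin L × Fin K, ∑ q : Fin L × Fin K,
            if (p.1 = i0 ∧ q.1 = i0) ∨ (p.1 = q.1 ∧ p.2 = q.2) then (1:ℝ) else 0 := by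
          refine Finset.sum_congr rfl fun p _ => ?_
          rw [hstep p]
          exact Finset.sum_congr rfl fun q _ => hE2 p.1 p.2 q.1 q.2
      _ = ∑ p : Fin L × Fin K, ∑ q : Fin L × Fin K,
            ((if p.1 = i0 then (1:ℝ) else 0) * (if q.1 = i0 then (1:ℝ) else 0)
              + ((if p = q then (1:ℝ) else 0)
                - (if p = q then (if p.1 = i0 then (1:ℝ) else 0) else 0))) := by
          refine Finset.sum_congr rfl fun p _ => Finset.sum_congr rfl fun q _ => ?_
          have hpq : ((p.1 = i0 ∧ q.1 = i0) ∨ (p.1 = q.1 ∧ p.2 = q.2))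
              ↔ ((p.1 = i0 ∧ q.1 = i0) ∨ p = q) := by
            constructor
            · rintro (hc | ⟨h1, h2⟩); exact Or.inl hc; exact Or.inr (Prod.ext h1 h2)
            · rintro (hc | rfl); exact Or.inl hc; exact Or.inr ⟨rfl, rfl⟩
          rw [if_congr hpq rfl rfl]
          exact ite_or_split _ _ _ (by rintro rfl; exact Iff.rfl)
      _ = (∑ p : Fin L × Fin K, ∑ q : Fin L × Fin K,
            (if p.1 = i0 then (1:ℝ) else 0) * (if q.1 = i0 then (1:ℝ) else 0))
          + ((∑ p : Fin L × Fin K, ∑ q : Fin L × Fin K, if p = q then (1:ℝ) else 0)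
            - (∑ p : Fin L × Fin K, ∑ q : Fin L × Fin K,
                if p = q then (if p.1 = i0 then (1:ℝ) else 0) else 0)) := by
          rw [← Finset.sum_sub_distrib, ← Finset.sum_add_distrib]
          refine Finset.sum_congr rfl fun p _ => ?_
          rw [← Finset.sum_sub_distrib, ← Finset.sum_add_distrib]
      _ = (K : ℝ) * K + ((L : ℝ) * K - K) := by
          rw [← Finset.sum_mul_sum Finset.univ Finset.univ
            (fun p : Fin L × Fin K => if p.1 = i0 then (1:ℝ) else 0)
            (fun q : Fin L × Fin K => if q.1 = i0 then (1:ℝ) else 0)]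
          have c1 : (∑ p : Fin L × Fin K, if p.1 = i0 then (1:ℝ) else 0) = (K : ℝ) := by
            rw [Fintype.sum_prod_type]
            rw [Finset.sum_comm]
            simp [Finset.sum_ite_eq']
          have c2 : (∑ p : Fin L × Fin K, ∑ q : Fin L × Fin K,
              if p = q then (1:ℝ) else 0) = (L : ℝ) * K := by
            have : ∀ p : Fin L × Fin K,
                (∑ q : Fin L × Fin K, if p = q then (1:ℝ) else 0) = 1 := by
              intro p; simp [Finset.sum_ite_eq]
            rw [Finset.sum_congr rfl fun p _ => this p]
            simp [Finset.card_univ, mul_comm]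
          have c3 : (∑ p : Fin L × Fin K, ∑ q : Fin L × Fin K,
              if p = q then (if p.1 = i0 then (1:ℝ) else 0) else 0) = (K : ℝ) := by
            have : ∀ p : Fin L × Fin K, (∑ q : Fin L × Fin K,
                if p = q then (if p.1 = i0 then (1:ℝ) else 0) else 0)
                = if p.1 = i0 then (1:ℝ) else 0 := by
              intro p; simp [Finset.sum_ite_eq]
            rw [Finset.sum_congr rfl fun p _ => this p, c1]
          rw [c1, c2, c3]
  have hvar : variance f μ = (∫ ω, f ω * f ω ∂μ) - (∫ ω, f ω ∂μ) ^ 2 := by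
    rw [variance_eq_sub hfmem]
    congr 1
    refine integral_congr_ae (Filter.Eventually.of_forall fun ω => ?_)
    simp [pow_two]
  show variance f μ = ((L : ℝ) - 1) * (K : ℝ)
  rw [hvar, hsqE]
  have : (∫ ω, f ω ∂μ) = (K : ℝ) := hmean
  rw [this]
  ring

/-- Mean and variance of the aggregated correlation at the correct residue class:
E[ỹ_k] = K, and under pairwise disjointness of the windows, Var[ỹ_k] = (L-1)K. -/
theorem aggregated_mean_variance
    (Ω : Type*) [MeasurableSpace Ω] (μ : Measure Ω) [IsProbabilityMeasure μ]
    (N M K L : ℕ) (hN : 0 < N) (hNM : N = M * L) (hKM : K ≤ M)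
    (X : Fin N → Ω → ℝ)
    (hmeas : ∀ i, Measurable (X i))
    (hindep : iIndepFun X μ)
    (hrad : ∀ i, μ {ω | X i ω = 1} = 1/2 ∧ μ {ω | X i ω = -1} = 1/2)
    (m : Fin N) (k : Fin M) (hk : (k : ℕ) = (m : ℕ) % M)
    (hpair : ∀ i i' : Fin L, i ≠ i' → ∀ j j' : Fin K,
      ((k : ℕ) + (i : ℕ) * M + j) % N ≠ ((k : ℕ) + (i' : ℕ) * M + j') % N)
    (hdm : ∀ i : Fin L, ((k : ℕ) + (i : ℕ) * M) % N ≠ (m : ℕ) →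
      ∀ j j' : Fin K, ((m : ℕ) + j) % N ≠ ((k : ℕ) + (i : ℕ) * M + j') % N) :
    (∫ ω, (∑ i : Fin L, ∑ j : Fin K,
        X ⟨((m : ℕ) + j) % N, Nat.mod_lt _ hN⟩ ω *
        X ⟨((k : ℕ) + (i : ℕ) * M + j) % N, Nat.mod_lt _ hN⟩ ω) ∂μ) = (K : ℝ) ∧
    variance (fun ω => ∑ i : Fin L, ∑ j : Fin K,
        X ⟨((m : ℕ) + j) % N, Nat.mod_lt _ hN⟩ ω *
        X ⟨((k : ℕ) + (i : ℕ) * M + j) % N, Nat.mod_lt _ hN⟩ ω) μ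
      = ((L : ℝ) - 1) * (K : ℝ) := by
  have hM : 0 < M := by
    rcases Nat.eq_zero_or_pos M with h | h
    · rw [h, zero_mul] at hNM; omega
    · exact h
  have hL : 0 < L := by
    rcases Nat.eq_zero_or_pos L with h | h
    · rw [h, mul_zero] at hNM; omega
    · exact h
  have hMN : M ≤ N := by
    rw [hNM]
    exact Nat.le_mul_of_pos_right M hL
  have hKN : K ≤ N := hKM.trans hMN
  -- the index maps
  set a : Fin K → Fin N := fun j => ⟨((m : ℕ) + j) % N, Nat.mod_lt _ hN⟩ with ha_def
  set b : Fin L → Fin K → Fin N :=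
    fun i j => ⟨((k : ℕ) + (i : ℕ) * M + j) % N, Nat.mod_lt _ hN⟩ with hb_def
  have hi0lt : (m : ℕ) / M < L := by
    rw [Nat.div_lt_iff_lt_mul hM, mul_comm]
    rw [← hNM]
    exact m.isLt
  set i0 : Fin L := ⟨(m : ℕ) / M, hi0lt⟩ with hi0_def
  -- injectivity of a
  have ha : Function.Injective a := by
    intro j j' h
    have h' : ((m : ℕ) + (j : ℕ)) % N = ((m : ℕ) + (j' : ℕ)) % N := congrArg Fin.val h
    have hmod : (j : ℕ) % N = (j' : ℕ) % N := Nat.ModEq.add_left_cancel' _ h'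
    rw [Nat.mod_eq_of_lt (lt_of_lt_of_le j.isLt hKN),
      Nat.mod_eq_of_lt (lt_of_lt_of_le j'.isLt hKN)] at hmod
    exact Fin.ext hmod
  have hbinj : ∀ i, Function.Injective (b i) := by
    intro i j j' h
    have h' : ((k : ℕ) + (i : ℕ) * M + (j : ℕ)) % N
        = ((k : ℕ) + (i : ℕ) * M + (j' : ℕ)) % N := congrArg Fin.val h
    have hmod : (j : ℕ) % N = (j' : ℕ) % N := Nat.ModEq.add_left_cancel' _ h'
    rw [Nat.mod_eq_of_lt (lt_of_lt_of_le j.isLt hKN),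
      Nat.mod_eq_of_lt (lt_of_lt_of_le j'.isLt hKN)] at hmod
    exact Fin.ext hmod
  have hb0 : ∀ j, b i0 j = a j := by
    intro j
    apply Fin.ext
    show ((k : ℕ) + ((m : ℕ) / M) * M + (j : ℕ)) % N = ((m : ℕ) + (j : ℕ)) % N
    rw [hk, Nat.mod_add_div']
  -- each other window stays away from m
  have hkey : ∀ i : Fin L, i ≠ i0 → ((k : ℕ) + (i : ℕ) * M) % N ≠ (m : ℕ) := by
    intro i hi hcon
    have hlt : (k : ℕ) + (i : ℕ) * M < N := by
      have h1 : (k : ℕ) + (i : ℕ) * M < M + (i : ℕ) * M := Nat.add_lt_add_right k.isLt _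
      have h2 : M + (i : ℕ) * M ≤ N := by
        rw [hNM]
        calc M + (i : ℕ) * M = ((i : ℕ) + 1) * M := by ring
          _ ≤ L * M := Nat.mul_le_mul_right M i.isLt
          _ = M * L := mul_comm _ _
      omega
    rw [Nat.mod_eq_of_lt hlt] at hcon
    have hm' : (m : ℕ) % M + ((m : ℕ) / M) * M = (m : ℕ) := Nat.mod_add_div' _ _
    rw [hk] at hcon
    have : (i : ℕ) * M = ((m : ℕ) / M) * M := by omega
    have hieq : (i : ℕ) = (m : ℕ) / M := Nat.eq_of_mul_eq_mul_right hM this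
    exact hi (Fin.ext hieq)
  have hab : ∀ i, i ≠ i0 → ∀ j j', a j ≠ b i j' := by
    intro i hi j j' h
    exact hdm i (hkey i hi) j j' (congrArg Fin.val h)
  have hbb : ∀ i i', i ≠ i' → ∀ j j', b i j ≠ b i' j' := by
    intro i i' hii j j' h
    exact hpair i i' hii j j' (congrArg Fin.val h)
  exact aggregated_mean_variance_aux μ X hmeas hindep hrad a b i0 ha hbinj hb0 hab hbb
end

section
/- For t ∈ ℝ^K nonzero, K ≤ M ≤ N, let T = circ([t, 0_{1×(N−K)}]) ∈ ℝ^{N×N}, T̂ = circ([t, 0_{1×(M−K)}]) ∈ ℝ^{M×M}, and let Φ be the M×N matrix consisting of the first M rows of an N×N circulant matrix. Then for every x ∈ ℝ^N and every index i with 0 ≤ i ≤ M−K, (T̂Φx)_i = (ΦTx)_i. -/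
open Finset

lemma sum_dite_shift {n K : ℕ} [NeZero n] (hK : K ≤ n) (t : Fin K → ℝ)
    (i : Fin n) (f : Fin n → ℝ) :
    ∑ j : Fin n, (if h : ((j - i : Fin n) : ℕ) < K then t ⟨((j - i : Fin n) : ℕ), h⟩ else 0) * f j
      = ∑ d : Fin K, t d * f (i + Fin.castLE hK d) := by
  rw [← Equiv.sum_comp (Equiv.addLeft i)
    (fun j => (if h : ((j - i : Fin n) : ℕ) < K then t ⟨((j - i : Fin n) : ℕ), h⟩ else 0) * f j)]
  simp only [Equiv.coe_addLeft, add_sub_cancel_left]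
  refine (Finset.sum_of_injOn (fun d => Fin.castLE hK d) ?_ (by simp) ?_ ?_).symm
  · intro a _ b _ h; exact Fin.castLE_injective hK h
  · intro e _ he
    have h : ¬ ((e : ℕ) < K) := by
      intro hlt
      exact he (by exact ⟨⟨(e : ℕ), hlt⟩, by simp, by simp [Fin.ext_iff]⟩)
    simp [h]
  · intro d _
    simp [Fin.ext_iff, Nat.mod_eq_of_lt (lt_of_lt_of_le d.isLt hK)]


/-- Valsesia–Magli (Theorem 1, 'if' direction): a partial circulant measurement
matrix commutes with circulant filtering on the first M-K+1 coordinates. -/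
theorem partial_circulant_commute
    (N M K : ℕ) (hN : 0 < N) (hKM : K ≤ M) (hMN : M ≤ N)
    (t : Fin K → ℝ) (ht : t ≠ 0)
    (T : Matrix (Fin N) (Fin N) ℝ)
    (hT : ∀ i j : Fin N, T i j =
      if h : ((j - i : Fin N) : ℕ) < K then t ⟨((j - i : Fin N) : ℕ), h⟩ else 0)
    (That : Matrix (Fin M) (Fin M) ℝ)
    (hThat : ∀ i j : Fin M, That i j =
      if h : ((j - i : Fin M) : ℕ) < K then t ⟨((j - i : Fin M) : ℕ), h⟩ else 0)
    (φ : Fin N → ℝ)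
    (Φ : Matrix (Fin M) (Fin N) ℝ)
    (hΦ : ∀ (k : Fin M) (j : Fin N), Φ k j = φ (j - ⟨(k : ℕ), lt_of_lt_of_le k.isLt hMN⟩)) :
    ∀ (x : Fin N → ℝ) (i : Fin M), (i : ℕ) ≤ M - K →
      That.mulVec (Φ.mulVec x) i = Φ.mulVec (T.mulVec x) i := by
  intro x i hi
  have hK0 : 0 < K := by
    rcases Nat.eq_zero_or_pos K with h | h
    · subst h; exact absurd (Subsingleton.elim t 0) ht
    · exact h
  have hM0 : 0 < M := lt_of_lt_of_le hK0 hKM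
  haveI : NeZero M := ⟨hM0.ne'⟩
  haveI : NeZero N := ⟨hN.ne'⟩
  have hKN : K ≤ N := hKM.trans hMN
  set i' : Fin N := ⟨(i : ℕ), lt_of_lt_of_le i.isLt hMN⟩ with hi'
  -- index fact
  have hidx : ∀ d : Fin K,
      (⟨((i + Fin.castLE hKM d : Fin M) : ℕ),
        lt_of_lt_of_le (i + Fin.castLE hKM d).isLt hMN⟩ : Fin N)
        = i' + Fin.castLE hKN d := by
    intro d
    have hd : (i : ℕ) + (d : ℕ) < M := by
      have := d.isLt
      omega
    have h1 : ((i + Fin.castLE hKM d : Fin M) : ℕ) = (i : ℕ) + (d : ℕ) := by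
      simp [Fin.add_def, Nat.mod_eq_of_lt hd]
    have h2 : ((i' + Fin.castLE hKN d : Fin N) : ℕ) = (i : ℕ) + (d : ℕ) := by
      simp [hi', Fin.add_def, Nat.mod_eq_of_lt (lt_of_lt_of_le hd hMN)]
    exact Fin.ext (by rw [h1, h2])
  -- LHS
  have hL : That.mulVec (Φ.mulVec x) i
      = ∑ d : Fin K, t d * ∑ l : Fin N, φ (l - Fin.castLE hKN d - i') * x l := by
    have e0 : That.mulVec (Φ.mulVec x) i
        = ∑ j : Fin M, That i j * (Φ.mulVec x) j := rfl
    rw [e0, Finset.sum_congr rfl (fun j _ => by rw [hThat i j]), sum_dite_shift hKM t i]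
    refine Finset.sum_congr rfl (fun d _ => ?_)
    congr 1
    have e1 : Φ.mulVec x (i + Fin.castLE hKM d)
        = ∑ l : Fin N, Φ (i + Fin.castLE hKM d) l * x l := rfl
    rw [e1]
    refine Finset.sum_congr rfl (fun l _ => ?_)
    rw [hΦ, hidx d]
    congr 2
    rw [sub_add_eq_sub_sub_swap]
  -- RHS
  have hR : Φ.mulVec (T.mulVec x) i
      = ∑ d : Fin K, t d * ∑ l : Fin N, φ (l - Fin.castLE hKN d - i') * x l := by
    have e0 : Φ.mulVec (T.mulVec x) i
        = ∑ l : Fin N, Φ i l * (T.mulVec x) l := rfl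
    rw [e0]
    have e1 : ∀ l : Fin N, (T.mulVec x) l
        = ∑ d : Fin K, t d * x (l + Fin.castLE hKN d) := by
      intro l
      have : (T.mulVec x) l = ∑ m : Fin N, T l m * x m := rfl
      rw [this, Finset.sum_congr rfl (fun m _ => by rw [hT l m]), sum_dite_shift hKN t l]
    calc ∑ l : Fin N, Φ i l * (T.mulVec x) l
        = ∑ l : Fin N, ∑ d : Fin K, Φ i l * (t d * x (l + Fin.castLE hKN d)) := by
          refine Finset.sum_congr rfl (fun l _ => ?_)
          rw [e1 l, Finset.mul_sum]
      _ = ∑ d : Fin K, ∑ l : Fin N, Φ i l * (t d * x (l + Fin.castLE hKN d)) :=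
          Finset.sum_comm
      _ = ∑ d : Fin K, t d * ∑ l : Fin N, φ (l - Fin.castLE hKN d - i') * x l := by
          refine Finset.sum_congr rfl (fun d _ => ?_)
          rw [Finset.mul_sum]
          rw [← Equiv.sum_comp (Equiv.subRight (Fin.castLE hKN d))
            (fun l => Φ i l * (t d * x (l + Fin.castLE hKN d)))]
          refine Finset.sum_congr rfl (fun l _ => ?_)
          simp only [Equiv.subRight_apply, sub_add_cancel]
          rw [hΦ]
          ring
  rw [hL, hR]
end
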